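/- For 1 ≤ i ≤ n, let W_{n,i} denote the total degree of vertex i in the preferential attachment graph on n vertices, defined in law by the Markov chain: W_{i,i} = 1 + B_i where B_i is Bernoulli with success probability 1/(2i−1), and for i < j ≤ n, conditional on W_{j−1,i}, W_{j,i} = W_{j−1,i} + B_j where B_j is Bernoulli with success probability W_{j−1,i}/(2j−1). Let I be uniformly distributed on {1, ..., n}, independent of the degree processes, and let Z have the Yule-Simon distribution, P(Z = k) = 4/(k(k+1)(k+2)) for k = 1,2,.... Then there is a constant C, independent of n, such that dTV(L(W_{n,I}), L(Z)) ≤ C · log(n)/n. -/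

import Mathlib

open MeasureTheory ProbabilityTheory Real

/-- `Ge(p){B}`: probability that a geometric random variable on `{1,2,...}`
with parameter `p` (mass `(1-p)^{k-1} p` at `k`) lies in `B ⊆ ℕ`. -/
noncomputable def geProbN (p : ℝ) (B : Set ℕ) : ℝ :=
  ∑' k : ℕ, B.indicator (fun _ => (1 - p) ^ k * p) (k + 1)

/-- Total variation distance between the law of a `ℕ`-valued random
variable `W` (under `μ`) and the geometric distribution `Ge(p)` on `{1,2,...}`. -/
noncomputable def dTVGeN {Ω : Type*} [MeasurableSpace Ω] (μ : Measure Ω)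
    (W : Ω → ℕ) (p : ℝ) : ℝ :=
  ⨆ B : Set ℕ, |(μ {ω | W ω ∈ B}).toReal - geProbN p B|

/-- Probability assigned to `B ⊆ ℕ` by the Yule-Simon distribution,
with mass `4/(k(k+1)(k+2))` at `k ∈ {1,2,...}`. -/
noncomputable def yuleProb (B : Set ℕ) : ℝ :=
  ∑' k : ℕ, B.indicator (fun _ => 4 / (((k : ℝ) + 1) * ((k : ℝ) + 2) * ((k : ℝ) + 3))) (k + 1)


noncomputable def yv (m : ℕ) : ℝ := 4 / ((m : ℝ) * ((m : ℝ) + 1) * ((m : ℝ) + 2))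

lemma yv_nonneg (m : ℕ) : 0 ≤ yv m := by
  unfold yv; positivity

lemma yv_succ_id (m : ℕ) (hm : 1 ≤ m) : (m : ℝ) * yv m = ((m : ℝ) + 3) * yv (m + 1) := by
  have h1 : (0:ℝ) < m := by exact_mod_cast hm
  unfold yv
  push_cast
  have h2 : ((m:ℝ)+1) > 0 := by positivity
  have h3 : ((m:ℝ)+2) > 0 := by positivity
  have h4 : ((m:ℝ)+3) > 0 := by positivity
  field_simp
  ring

lemma yv_sum_range (m : ℕ) :
    ∑ k ∈ Finset.range m, yv (k + 1) = 1 - 2 / (((m : ℝ) + 1) * ((m : ℝ) + 2)) := by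
  induction m with
  | zero => norm_num
  | succ m ih =>
    rw [Finset.sum_range_succ, ih]
    unfold yv
    push_cast
    have h1 : ((m:ℝ) + 1) > 0 := by positivity
    have h2 : ((m:ℝ) + 2) > 0 := by positivity
    have h3 : ((m:ℝ) + 3) > 0 := by positivity
    field_simp
    ring

lemma yv_hasSum : HasSum (fun k => yv (k + 1)) 1 := by
  rw [hasSum_iff_tendsto_nat_of_nonneg (fun i => yv_nonneg _)]
  have h : ∀ m : ℕ, ∑ i ∈ Finset.range m, yv (i+1) = 1 - 2 / (((m : ℝ) + 1) * ((m : ℝ) + 2)) :=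
    yv_sum_range
  simp_rw [h]
  have : Filter.Tendsto (fun m : ℕ => 2 / (((m : ℝ) + 1) * ((m : ℝ) + 2))) Filter.atTop (nhds 0) := by
    apply squeeze_zero (fun m => by positivity) (g := fun m : ℕ => 2 * (1 / ((m:ℝ) + 1)))
    · intro m
      rw [mul_one_div]
      apply div_le_div_of_nonneg_left (by norm_num) (by positivity)
      nlinarith [Nat.cast_nonneg (α := ℝ) m]
    · simpa using (tendsto_one_div_add_atTop_nhds_zero_nat (𝕜 := ℝ)).const_mul 2
  simpa using Filter.Tendsto.const_sub 1 this

lemma yv_sum_le_one (m : ℕ) : ∑ k ∈ Finset.range m, yv (k + 1) ≤ 1 :=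
  sum_le_hasSum _ (fun i _ => yv_nonneg _) yv_hasSum


section PA

variable {Ω : Type} [MeasurableSpace Ω] (μ : Measure Ω) [IsProbabilityMeasure μ]

lemma meas_level (W : Ω → ℕ) (hW : Measurable W) (k : ℕ) :
    MeasurableSet {ω | W ω = k} := hW (measurableSet_singleton k)

lemma hasSum_toReal_union (f : ℕ → Set Ω) (hm : ∀ k, MeasurableSet (f k))
    (hd : Pairwise (Function.onFun Disjoint f)) :
    HasSum (fun k => (μ (f k)).toReal) ((μ (⋃ k, f k)).toReal) := by
  have h := measure_iUnion hd hm (μ := μ)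
  have hne : ∑' k, μ (f k) ≠ ⊤ := by
    rw [← h]; exact measure_ne_top μ _
  have hts := ENNReal.hasSum_toReal hne
  rw [h, ENNReal.tsum_toReal_eq (fun a => measure_ne_top μ _)]
  exact hts

lemma hasSum_inter_level (W : Ω → ℕ) (hW : Measurable W) (s : Set Ω) (hs : MeasurableSet s) :
    HasSum (fun w => (μ (s ∩ {ω | W ω = w})).toReal) ((μ s).toReal) := by
  have hu : (⋃ w, s ∩ {ω | W ω = w}) = s := by
    ext ω; simp only [Set.mem_iUnion, Set.mem_inter_iff, Set.mem_setOf_eq]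
    exact ⟨fun ⟨w, hw⟩ => hw.1, fun h => ⟨W ω, h, rfl⟩⟩
  have := hasSum_toReal_union μ (fun w => s ∩ {ω | W ω = w})
    (fun w => hs.inter (meas_level W hW w))
    (fun a b hab => by
      apply Set.disjoint_left.2
      rintro ω ⟨-, h1⟩ ⟨-, h2⟩
      exact hab (h1.symm.trans h2))
  rwa [hu] at this

lemma hasSum_level (W : Ω → ℕ) (hW : Measurable W) :
    HasSum (fun w => (μ {ω | W ω = w}).toReal) 1 := by
  have := hasSum_inter_level μ W hW Set.univ MeasurableSet.univ
  simpa using this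

end PA

open MeasureTheory ProbabilityTheory Real

section PA3

variable {Ω : Type} [MeasurableSpace Ω] (μ : Measure Ω) [IsProbabilityMeasure μ]
variable (V : ℕ → ℕ → Ω → ℕ)

/-- `pp μ V i j k = P(V_{i,j} = k)` -/
noncomputable def pp (i j k : ℕ) : ℝ := (μ {ω | V i j ω = k}).toReal

lemma pp_nonneg (i j k : ℕ) : 0 ≤ pp μ V i j k := ENNReal.toReal_nonneg

lemma step_null (hV : ∀ i j, Measurable (V i j)) (i j : ℕ)
    (hst : ∀ w : ℕ, (μ {ω | V i (j + 1) ω = w + 1 ∧ V i j ω = w}).toReal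
              = (μ {ω | V i j ω = w}).toReal * w / (2 * ((j : ℝ) + 1) - 1) ∧
            (μ {ω | V i (j + 1) ω = w ∧ V i j ω = w}).toReal
              = (μ {ω | V i j ω = w}).toReal * (1 - w / (2 * ((j : ℝ) + 1) - 1)))
    (w k : ℕ) (hk1 : k ≠ w) (hk2 : k ≠ w + 1) :
    μ ({ω | V i (j + 1) ω = k} ∩ {ω | V i j ω = w}) = 0 := by
  set A : Set Ω := {ω | V i (j + 1) ω = w + 1 ∧ V i j ω = w} with hA
  set B : Set Ω := {ω | V i (j + 1) ω = w ∧ V i j ω = w} with hB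
  set S : Set Ω := {ω | V i j ω = w} with hS
  have hmA : MeasurableSet A := by
    have : A = {ω | V i (j+1) ω = w + 1} ∩ S := rfl
    rw [this]
    exact (meas_level (V i (j+1)) (hV i (j+1)) (w+1)).inter (meas_level (V i j) (hV i j) w)
  have hmB : MeasurableSet B := by
    have : B = {ω | V i (j+1) ω = w} ∩ S := rfl
    rw [this]
    exact (meas_level (V i (j+1)) (hV i (j+1)) w).inter (meas_level (V i j) (hV i j) w)
  have hdisj : Disjoint A B := by
    apply Set.disjoint_left.2
    rintro ω ⟨h1, -⟩ ⟨h2, -⟩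
    omega
  have hsum : (μ A).toReal + (μ B).toReal = (μ S).toReal := by
    rw [(hst w).1, (hst w).2]; ring
  have hAuB : μ (A ∪ B) = μ S := by
    rw [measure_union hdisj hmB]
    rw [← ENNReal.toReal_eq_toReal_iff' (by finiteness) (measure_ne_top μ S),
      ENNReal.toReal_add (measure_ne_top μ A) (measure_ne_top μ B)]
    exact hsum
  have hsub : A ∪ B ⊆ S := by
    rintro ω (⟨-, h⟩ | ⟨-, h⟩) <;> exact h
  have hdiff : μ (S \ (A ∪ B)) = 0 := by
    rw [measure_diff hsub (hmA.union hmB).nullMeasurableSet (by finiteness), hAuB, tsub_self]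
  apply measure_mono_null _ hdiff
  rintro ω ⟨h1, h2⟩
  refine ⟨h2, ?_⟩
  rintro (⟨ha, -⟩ | ⟨hb, -⟩)
  · exact hk2 (h1.symm.trans ha ▸ rfl)
  · exact hk1 (h1.symm.trans hb ▸ rfl)

lemma pp_rec (hV : ∀ i j, Measurable (V i j)) (i j : ℕ)
    (hst : ∀ w : ℕ, (μ {ω | V i (j + 1) ω = w + 1 ∧ V i j ω = w}).toReal
              = (μ {ω | V i j ω = w}).toReal * w / (2 * ((j : ℝ) + 1) - 1) ∧
            (μ {ω | V i (j + 1) ω = w ∧ V i j ω = w}).toReal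
              = (μ {ω | V i j ω = w}).toReal * (1 - w / (2 * ((j : ℝ) + 1) - 1)))
    (m : ℕ) :
    pp μ V i (j + 1) (m + 1)
      = (1 - ((m : ℝ) + 1) / (2 * ((j : ℝ) + 1) - 1)) * pp μ V i j (m + 1)
        + ((m : ℝ) / (2 * ((j : ℝ) + 1) - 1)) * pp μ V i j m := by
  have hs := hasSum_inter_level μ (V i j) (hV i j) {ω | V i (j+1) ω = m + 1}
    (meas_level (V i (j+1)) (hV i (j+1)) (m+1))
  have hzero : ∀ w ∉ ({m, m + 1} : Finset ℕ),
      (μ ({ω | V i (j+1) ω = m + 1} ∩ {ω | V i j ω = w})).toReal = 0 := by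
    intro w hw
    simp only [Finset.mem_insert, Finset.mem_singleton, not_or] at hw
    rw [step_null μ V hV i j hst w (m+1) (by omega) (by omega)]
    simp
  have hs2 : HasSum (fun w => (μ ({ω | V i (j+1) ω = m + 1} ∩ {ω | V i j ω = w})).toReal)
      (∑ w ∈ ({m, m + 1} : Finset ℕ), (μ ({ω | V i (j+1) ω = m + 1} ∩ {ω | V i j ω = w})).toReal) :=
    hasSum_sum_of_ne_finset_zero hzero
  have heq := hs.unique hs2
  rw [Finset.sum_pair (by omega : m ≠ m + 1)] at heq
  have e1 : ({ω | V i (j+1) ω = m + 1} ∩ {ω | V i j ω = m})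
      = {ω | V i (j + 1) ω = m + 1 ∧ V i j ω = m} := rfl
  have e2 : ({ω | V i (j+1) ω = m + 1} ∩ {ω | V i j ω = m + 1})
      = {ω | V i (j + 1) ω = m + 1 ∧ V i j ω = m + 1} := rfl
  rw [e1, e2] at heq
  rw [show pp μ V i (j+1) (m+1) = (μ {ω | V i (j+1) ω = m + 1}).toReal from rfl, heq,
    (hst m).1, (hst (m+1)).2]
  show _ * ((m:ℕ):ℝ) / _ + _ * (1 - ((m+1:ℕ):ℝ) / _) = _
  push_cast
  unfold pp
  ring

end PA3

section PA4

variable {Ω : Type} [MeasurableSpace Ω] (μ : Measure Ω) [IsProbabilityMeasure μ]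
variable (V : ℕ → ℕ → Ω → ℕ)

lemma pp_init_ne (i k : ℕ) (h12 : ∀ ω, V i i ω = 1 ∨ V i i ω = 2)
    (hk : k ≠ 1 ∧ k ≠ 2) : pp μ V i i k = 0 := by
  have he : {ω | V i i ω = k} = ∅ := by
    ext ω
    simp only [Set.mem_setOf_eq, Set.mem_empty_iff_false, iff_false]
    intro h
    rcases h12 ω with h1 | h1 <;> omega
  unfold pp
  rw [he]
  simp

lemma pp_init_one (hV : ∀ i j, Measurable (V i j)) (i : ℕ)
    (h12 : ∀ ω, V i i ω = 1 ∨ V i i ω = 2) :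
    pp μ V i i 1 = 1 - pp μ V i i 2 := by
  have hs := hasSum_level μ (V i i) (hV i i)
  have hzero : ∀ w ∉ ({1, 2} : Finset ℕ), (μ {ω | V i i ω = w}).toReal = 0 := by
    intro w hw
    simp only [Finset.mem_insert, Finset.mem_singleton, not_or] at hw
    exact pp_init_ne μ V i w h12 hw
  have h2 := (hasSum_sum_of_ne_finset_zero hzero).unique hs
  rw [Finset.sum_pair (by omega : (1:ℕ) ≠ 2)] at h2
  unfold pp
  linarith

lemma meas_zero_of_pp (i j k : ℕ) (h : pp μ V i j k = 0) : μ {ω | V i j ω = k} = 0 := by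
  rcases (ENNReal.toReal_eq_zero_iff _).mp h with h1 | h1
  · exact h1
  · exact absurd h1 (measure_ne_top μ _)

variable (n : ℕ)

/-- vanishing of `P(V_{i,j} = k)` for `k = 0` and `k ≥ j+2`. -/
lemma pp_out (hV : ∀ i j, Measurable (V i j))
    (hinit : ∀ i : ℕ, 1 ≤ i → i ≤ n → (∀ ω, V i i ω = 1 ∨ V i i ω = 2) ∧
        (μ {ω | V i i ω = 2}).toReal = 1 / (2 * (i : ℝ) - 1))
    (htrans : ∀ i : ℕ, 1 ≤ i → ∀ j : ℕ, i ≤ j → j < n → ∀ w : ℕ,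
        (μ {ω | V i (j + 1) ω = w + 1 ∧ V i j ω = w}).toReal
            = (μ {ω | V i j ω = w}).toReal * w / (2 * ((j : ℝ) + 1) - 1) ∧
        (μ {ω | V i (j + 1) ω = w ∧ V i j ω = w}).toReal
            = (μ {ω | V i j ω = w}).toReal * (1 - w / (2 * ((j : ℝ) + 1) - 1)))
    (i : ℕ) (hi : 1 ≤ i) (j : ℕ) (hij : i ≤ j) :
    j ≤ n → ∀ k : ℕ, (k = 0 ∨ j + 2 ≤ k) → pp μ V i j k = 0 := by
  induction j, hij using Nat.le_induction with
  | base =>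
    intro hin k hk
    exact pp_init_ne μ V i k (hinit i hi hin).1 (by omega)
  | succ j hij ih =>
    intro hjn k hk
    have hjn' : j < n := by omega
    have ihn := ih (by omega)
    have hst := htrans i hi j hij hjn'
    rcases hk with hk | hk
    · subst hk
      -- P(V i (j+1) = 0) = 0
      have hs := hasSum_inter_level μ (V i j) (hV i j) {ω | V i (j+1) ω = 0}
        (meas_level (V i (j+1)) (hV i (j+1)) 0)
      have hzero : ∀ w, (μ ({ω | V i (j+1) ω = 0} ∩ {ω | V i j ω = w})).toReal = 0 := by
        intro w
        rcases Nat.eq_zero_or_pos w with hw | hw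
        · subst hw
          have hnull : μ {ω | V i j ω = 0} = 0 := meas_zero_of_pp μ V i j 0 (ihn 0 (Or.inl rfl))
          have : μ ({ω | V i (j+1) ω = 0} ∩ {ω | V i j ω = 0}) = 0 :=
            measure_mono_null Set.inter_subset_right hnull
          rw [this]; simp
        · rw [step_null μ V hV i j hst w 0 (by omega) (by omega)]; simp
      have hs0 : HasSum (fun w => (μ ({ω | V i (j+1) ω = 0} ∩ {ω | V i j ω = w})).toReal) 0 := by
        have : (fun w => (μ ({ω | V i (j+1) ω = 0} ∩ {ω | V i j ω = w})).toReal)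
            = fun _ => (0:ℝ) := funext hzero
        rw [this]
        exact hasSum_zero
      exact hs.unique hs0
    · obtain ⟨m, rfl⟩ : ∃ m, k = m + 1 := ⟨k - 1, by omega⟩
      rw [pp_rec μ V hV i j hst m, ihn (m+1) (by omega), ihn m (by omega)]
      ring

lemma NN_out (hV : ∀ i j, Measurable (V i j))
    (hinit : ∀ i : ℕ, 1 ≤ i → i ≤ n → (∀ ω, V i i ω = 1 ∨ V i i ω = 2) ∧
        (μ {ω | V i i ω = 2}).toReal = 1 / (2 * (i : ℝ) - 1))
    (htrans : ∀ i : ℕ, 1 ≤ i → ∀ j : ℕ, i ≤ j → j < n → ∀ w : ℕ,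
        (μ {ω | V i (j + 1) ω = w + 1 ∧ V i j ω = w}).toReal
            = (μ {ω | V i j ω = w}).toReal * w / (2 * ((j : ℝ) + 1) - 1) ∧
        (μ {ω | V i (j + 1) ω = w ∧ V i j ω = w}).toReal
            = (μ {ω | V i j ω = w}).toReal * (1 - w / (2 * ((j : ℝ) + 1) - 1)))
    (j : ℕ) (hjn : j ≤ n) (k : ℕ) (hk : k = 0 ∨ j + 2 ≤ k) :
    ∑ i ∈ Finset.Icc 1 j, pp μ V i j k = 0 := by
  apply Finset.sum_eq_zero
  intro i hi
  rw [Finset.mem_Icc] at hi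
  exact pp_out μ V n hV hinit htrans i hi.1 j hi.2 hjn k hk

end PA4

section PA5

variable {Ω : Type} [MeasurableSpace Ω] (μ : Measure Ω) [IsProbabilityMeasure μ]
variable (V : ℕ → ℕ → Ω → ℕ) (n : ℕ)

lemma NN_rec (hV : ∀ i j, Measurable (V i j))
    (htrans : ∀ i : ℕ, 1 ≤ i → ∀ j : ℕ, i ≤ j → j < n → ∀ w : ℕ,
        (μ {ω | V i (j + 1) ω = w + 1 ∧ V i j ω = w}).toReal
            = (μ {ω | V i j ω = w}).toReal * w / (2 * ((j : ℝ) + 1) - 1) ∧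
        (μ {ω | V i (j + 1) ω = w ∧ V i j ω = w}).toReal
            = (μ {ω | V i j ω = w}).toReal * (1 - w / (2 * ((j : ℝ) + 1) - 1)))
    (j : ℕ) (hj : 1 ≤ j) (hjn : j < n) (m : ℕ) :
    ∑ i ∈ Finset.Icc 1 (j+1), pp μ V i (j+1) (m+1)
      = (1 - ((m : ℝ) + 1) / (2 * (j : ℝ) + 1)) * (∑ i ∈ Finset.Icc 1 j, pp μ V i j (m+1))
        + ((m : ℝ) / (2 * (j : ℝ) + 1)) * (∑ i ∈ Finset.Icc 1 j, pp μ V i j m)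
        + pp μ V (j+1) (j+1) (m+1) := by
  have hD : 2 * ((j:ℝ) + 1) - 1 = 2 * (j:ℝ) + 1 := by ring
  rw [Finset.sum_Icc_succ_top (by omega : 1 ≤ j + 1)]
  have hterm : ∀ i ∈ Finset.Icc 1 j, pp μ V i (j+1) (m+1)
      = (1 - ((m : ℝ) + 1) / (2 * (j : ℝ) + 1)) * pp μ V i j (m+1)
        + ((m : ℝ) / (2 * (j : ℝ) + 1)) * pp μ V i j m := by
    intro i hi
    rw [Finset.mem_Icc] at hi
    have := pp_rec μ V hV i j (htrans i hi.1 j hi.2 hjn) m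
    rw [hD] at this
    exact this
  rw [Finset.sum_congr rfl hterm, Finset.sum_add_distrib, ← Finset.mul_sum, ← Finset.mul_sum]

lemma key_step (hV : ∀ i j, Measurable (V i j))
    (hinit : ∀ i : ℕ, 1 ≤ i → i ≤ n → (∀ ω, V i i ω = 1 ∨ V i i ω = 2) ∧
        (μ {ω | V i i ω = 2}).toReal = 1 / (2 * (i : ℝ) - 1))
    (htrans : ∀ i : ℕ, 1 ≤ i → ∀ j : ℕ, i ≤ j → j < n → ∀ w : ℕ,
        (μ {ω | V i (j + 1) ω = w + 1 ∧ V i j ω = w}).toReal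
            = (μ {ω | V i j ω = w}).toReal * w / (2 * ((j : ℝ) + 1) - 1) ∧
        (μ {ω | V i (j + 1) ω = w ∧ V i j ω = w}).toReal
            = (μ {ω | V i j ω = w}).toReal * (1 - w / (2 * ((j : ℝ) + 1) - 1)))
    (j : ℕ) (hj : 1 ≤ j) (hjn : j < n) (m : ℕ) :
    |(∑ i ∈ Finset.Icc 1 (j+1), pp μ V i (j+1) (m+1)) - ((j:ℝ)+1) * yv (m+1)|
      ≤ |(∑ i ∈ Finset.Icc 1 j, pp μ V i j (m+1)) - (j:ℝ) * yv (m+1)|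
        + ((m:ℝ) * |(∑ i ∈ Finset.Icc 1 j, pp μ V i j m) - (j:ℝ) * yv m|
            - ((m:ℝ)+1) * |(∑ i ∈ Finset.Icc 1 j, pp μ V i j (m+1)) - (j:ℝ) * yv (m+1)|)
          / (2*(j:ℝ)+1)
        + (yv (m+1) + (if m ≤ 1 then (1:ℝ) else 0)) / (2*(j:ℝ)+1) := by
  have hD : (0:ℝ) < 2*(j:ℝ)+1 := by positivity
  set D : ℝ := 2*(j:ℝ)+1 with hDdef
  set a : ℝ := (∑ i ∈ Finset.Icc 1 j, pp μ V i j (m+1)) with ha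
  set b : ℝ := (∑ i ∈ Finset.Icc 1 j, pp μ V i j m) with hb
  set ya : ℝ := yv (m+1) with hya
  set yb : ℝ := yv m with hyb
  have hya0 : 0 ≤ ya := yv_nonneg _
  have hrec := NN_rec μ V n hV htrans j hj hjn m
  set piv : ℝ := pp μ V (j+1) (j+1) (m+1) with hpiv
  have hj1n : j + 1 ≤ n := by omega
  have hι : (0:ℝ) ≤ (if m ≤ 1 then (1:ℝ) else 0) := by positivity
  by_cases hcase : m + 1 ≤ 2*j + 1
  · -- good case
    have hc1 : (0:ℝ) ≤ 1 - ((m:ℝ)+1)/D := by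
      rw [sub_nonneg, div_le_one hD]
      have : ((m:ℝ)+1) ≤ 2*(j:ℝ)+1 := by
        have := hcase
        push_cast
        exact_mod_cast by exact_mod_cast Nat.cast_le.2 this
      linarith [this]
    have hc2 : (0:ℝ) ≤ (m:ℝ)/D := by positivity
    -- remainder bound
    have hR : |piv - ya + ((j:ℝ)/D) * ((m:ℝ) * yb - ((m:ℝ)+1) * ya)|
        ≤ (ya + (if m ≤ 1 then (1:ℝ) else 0)) / D := by
      have h21 : 2*((j:ℝ)+1) - 1 = D := by rw [hDdef]; ring
      have hne : (2*(j:ℝ)+1) ≠ 0 := by positivity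
      by_cases hm0 : m = 0
      · subst hm0
        have h2 := (hinit (j+1) (by omega) hj1n).2
        push_cast at h2
        have hpiv1 : piv = 1 - 1/(2*((j:ℝ)+1) - 1) := by
          rw [hpiv, show ((0:ℕ)+1) = 1 from rfl,
            pp_init_one μ V hV (j+1) (hinit (j+1) (by omega) hj1n).1,
            show pp μ V (j+1) (j+1) 2 = (μ {ω | V (j+1) (j+1) ω = 2}).toReal from rfl, h2]
        have hyav : ya = 2/3 := by rw [hya]; unfold yv; norm_num
        have hybv : yb = 0 := by rw [hyb]; unfold yv; norm_num
        have he : piv - ya + ((j:ℝ)/D) * (((0:ℕ):ℝ) * yb - (((0:ℕ):ℝ)+1) * ya)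
            = -(2/3)/D := by
          rw [hpiv1, hyav, hybv, h21, hDdef]
          push_cast
          field_simp
          ring
        rw [he]
        have hub : |(-(2/3):ℝ)/D| = (2/3)/D := by
          rw [abs_div, abs_neg, abs_of_pos hD, abs_of_nonneg (by norm_num : (0:ℝ) ≤ 2/3)]
        rw [hub, hyav]
        have hite : (if (0:ℕ) ≤ 1 then (1:ℝ) else 0) = 1 := by norm_num
        rw [hite]
        gcongr
        norm_num
      · by_cases hm1 : m = 1
        · subst hm1
          have h2 := (hinit (j+1) (by omega) hj1n).2
          push_cast at h2
          have hpiv1 : piv = 1/(2*((j:ℝ)+1) - 1) := by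
            rw [hpiv, show ((1:ℕ)+1) = 2 from rfl,
              show pp μ V (j+1) (j+1) 2 = (μ {ω | V (j+1) (j+1) ω = 2}).toReal from rfl, h2]
          have hyav : ya = 1/6 := by rw [hya]; unfold yv; norm_num
          have hybv : yb = 2/3 := by rw [hyb]; unfold yv; norm_num
          have he : piv - ya + ((j:ℝ)/D) * (((1:ℕ):ℝ) * yb - (((1:ℕ):ℝ)+1) * ya)
              = (5/6)/D := by
            rw [hpiv1, hyav, hybv, h21, hDdef]
            push_cast
            field_simp
            ring
          rw [he]
          have hub : |((5/6):ℝ)/D| = (5/6)/D := by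
            rw [abs_div, abs_of_pos hD, abs_of_nonneg (by norm_num : (0:ℝ) ≤ 5/6)]
          rw [hub, hyav]
          have hite : (if (1:ℕ) ≤ 1 then (1:ℝ) else 0) = 1 := by norm_num
          rw [hite]
          gcongr
          norm_num
        · have hm2 : 2 ≤ m := by omega
          have hpiv0 : piv = 0 := by
            rw [hpiv]
            exact pp_init_ne μ V (j+1) (m+1) (hinit (j+1) (by omega) hj1n).1 (by omega)
          have hid : (m:ℝ) * yb = ((m:ℝ)+3) * ya := by
            rw [hyb, hya]
            exact yv_succ_id m (by omega)
          have he : piv - ya + ((j:ℝ)/D) * ((m:ℝ) * yb - ((m:ℝ)+1) * ya)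
              = -ya/D := by
            rw [hpiv0]
            have hstep : (m:ℝ) * yb - ((m:ℝ)+1) * ya = 2 * ya := by
              rw [hid]; ring
            rw [hstep, hDdef]
            field_simp
            ring
          rw [he]
          have hub : |(-ya)/D| = ya/D := by
            rw [abs_div, abs_neg, abs_of_pos hD, abs_of_nonneg hya0]
          rw [hub]
          have hite : (if m ≤ 1 then (1:ℝ) else 0) = 0 := by
            rw [if_neg (by omega)]
          rw [hite, add_zero]
    -- exact decomposition
    have hdecomp : (∑ i ∈ Finset.Icc 1 (j+1), pp μ V i (j+1) (m+1)) - ((j:ℝ)+1) * ya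
        = (1 - ((m:ℝ)+1)/D) * (a - (j:ℝ)*ya) + ((m:ℝ)/D) * (b - (j:ℝ)*yb)
          + (piv - ya + ((j:ℝ)/D) * ((m:ℝ) * yb - ((m:ℝ)+1) * ya)) := by
      rw [hrec, ← ha, ← hb, ← hDdef]
      field_simp
      ring
    calc |(∑ i ∈ Finset.Icc 1 (j+1), pp μ V i (j+1) (m+1)) - ((j:ℝ)+1) * ya|
        ≤ (1 - ((m:ℝ)+1)/D) * |a - (j:ℝ)*ya| + ((m:ℝ)/D) * |b - (j:ℝ)*yb|
          + |piv - ya + ((j:ℝ)/D) * ((m:ℝ) * yb - ((m:ℝ)+1) * ya)| := by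
          rw [hdecomp]
          refine (abs_add_le _ _).trans (add_le_add ?_ le_rfl)
          refine (abs_add_le _ _).trans (add_le_add ?_ ?_)
          · rw [abs_mul, abs_of_nonneg hc1]
          · rw [abs_mul, abs_of_nonneg hc2]
      _ ≤ (1 - ((m:ℝ)+1)/D) * |a - (j:ℝ)*ya| + ((m:ℝ)/D) * |b - (j:ℝ)*yb|
          + (ya + (if m ≤ 1 then (1:ℝ) else 0)) / D := by linarith [hR]
      _ = |a - (j:ℝ)*ya| + ((m:ℝ) * |b - (j:ℝ)*yb| - ((m:ℝ)+1) * |a - (j:ℝ)*ya|) / D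
          + (ya + (if m ≤ 1 then (1:ℝ) else 0)) / D := by
          field_simp
          ring
  · -- bad case : m ≥ 2j+1, all NN terms vanish
    have hm : 2*j + 1 ≤ m := by omega
    have hm1 : 1 ≤ m := by omega
    have hNa : a = 0 := NN_out μ V n hV hinit htrans j (by omega) (m+1) (by omega)
    have hNb : b = 0 := NN_out μ V n hV hinit htrans j (by omega) m (by omega)
    have hNc : (∑ i ∈ Finset.Icc 1 (j+1), pp μ V i (j+1) (m+1)) = 0 :=
      NN_out μ V n hV hinit htrans (j+1) hj1n (m+1) (by omega)
    have hid : (m:ℝ) * yb = ((m:ℝ)+3) * ya := by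
      have := yv_succ_id m hm1
      rw [hyb, hya]; exact this
    have hyb0 : 0 ≤ yb := yv_nonneg _
    rw [hNa, hNb, hNc]
    have habs1 : |(0:ℝ) - ((j:ℝ)+1) * ya| = ((j:ℝ)+1) * ya := by
      rw [zero_sub, abs_neg, abs_of_nonneg (mul_nonneg (by positivity) hya0)]
    have habs2 : |(0:ℝ) - (j:ℝ) * ya| = (j:ℝ) * ya := by
      rw [zero_sub, abs_neg, abs_of_nonneg (mul_nonneg (by positivity) hya0)]
    have habs3 : |(0:ℝ) - (j:ℝ) * yb| = (j:ℝ) * yb := by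
      rw [zero_sub, abs_neg, abs_of_nonneg (mul_nonneg (by positivity) hyb0)]
    rw [habs1, habs2, habs3]
    have hkey : ((m:ℝ)*((j:ℝ)*yb) - ((m:ℝ)+1)*((j:ℝ)*ya)) = 2*(j:ℝ)*ya := by
      have hsw : (m:ℝ)*((j:ℝ)*yb) = (j:ℝ)*((m:ℝ)*yb) := by ring
      rw [hsw, hid]
      ring
    rw [hkey, add_assoc, ← add_div]
    have hfin : ya ≤ (2*(j:ℝ)*ya + (ya + (if m ≤ 1 then (1:ℝ) else 0)))/D := by
      rw [le_div_iff₀ hD, hDdef]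
      nlinarith [hι]
    nlinarith [hfin]

end PA5

section PA6

variable {Ω : Type} [MeasurableSpace Ω] (μ : Measure Ω) [IsProbabilityMeasure μ]
variable (V : ℕ → ℕ → Ω → ℕ) (n : ℕ)

lemma S_bound (hn : 2 ≤ n) (hV : ∀ i j, Measurable (V i j))
    (hinit : ∀ i : ℕ, 1 ≤ i → i ≤ n → (∀ ω, V i i ω = 1 ∨ V i i ω = 2) ∧
        (μ {ω | V i i ω = 2}).toReal = 1 / (2 * (i : ℝ) - 1))
    (htrans : ∀ i : ℕ, 1 ≤ i → ∀ j : ℕ, i ≤ j → j < n → ∀ w : ℕ,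
        (μ {ω | V i (j + 1) ω = w + 1 ∧ V i j ω = w}).toReal
            = (μ {ω | V i j ω = w}).toReal * w / (2 * ((j : ℝ) + 1) - 1) ∧
        (μ {ω | V i (j + 1) ω = w ∧ V i j ω = w}).toReal
            = (μ {ω | V i j ω = w}).toReal * (1 - w / (2 * ((j : ℝ) + 1) - 1))) :
    ∑ k ∈ Finset.range (n+1),
        |(∑ i ∈ Finset.Icc 1 n, pp μ V i n (k+1)) - (n:ℝ) * yv (k+1)|
      ≤ 2 + 2 * ((harmonic (n-1) : ℚ) : ℝ) := by
  have main : ∀ j : ℕ, 1 ≤ j → j ≤ n →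
      ∑ k ∈ Finset.range (n+1),
          |(∑ i ∈ Finset.Icc 1 j, pp μ V i j (k+1)) - (j:ℝ) * yv (k+1)|
        ≤ 2 + 2 * ((harmonic (j-1) : ℚ) : ℝ) := by
    intro j hj
    induction j, hj using Nat.le_induction with
    | base =>
      intro h1n
      simp only [Nat.sub_self, harmonic_zero, Rat.cast_zero, mul_zero, add_zero]
      have hterm : ∀ k ∈ Finset.range (n+1),
          |(∑ i ∈ Finset.Icc 1 1, pp μ V i 1 (k+1)) - (1:ℕ) * yv (k+1)|
            ≤ pp μ V 1 1 (k+1) + yv (k+1) := by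
        intro k _
        rw [Finset.Icc_self, Finset.sum_singleton]
        refine (abs_sub _ _).trans ?_
        rw [abs_of_nonneg (pp_nonneg μ V 1 1 (k+1)), Nat.cast_one, one_mul,
          abs_of_nonneg (yv_nonneg (k+1))]
      have h1 : ∑ k ∈ Finset.range (n+1), pp μ V 1 1 (k+1) ≤ 1 := by
        rw [← Finset.sum_image (g := fun k => k + 1)
          (f := fun w => pp μ V 1 1 w) (fun x _ y _ h => by simpa using h)]
        exact sum_le_hasSum _ (fun w _ => pp_nonneg μ V 1 1 w)
          (hasSum_level μ (V 1 1) (hV 1 1))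
      have h2 : ∑ k ∈ Finset.range (n+1), yv (k+1) ≤ 1 := yv_sum_le_one (n+1)
      calc ∑ k ∈ Finset.range (n+1),
            |(∑ i ∈ Finset.Icc 1 1, pp μ V i 1 (k+1)) - ((1:ℕ):ℝ) * yv (k+1)|
          ≤ ∑ k ∈ Finset.range (n+1), (pp μ V 1 1 (k+1) + yv (k+1)) :=
            Finset.sum_le_sum hterm
        _ = (∑ k ∈ Finset.range (n+1), pp μ V 1 1 (k+1))
            + ∑ k ∈ Finset.range (n+1), yv (k+1) := Finset.sum_add_distrib
        _ ≤ 2 := by linarith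
    | succ j hj ih =>
      intro hjn
      have hjn' : j < n := by omega
      have ihv := ih (by omega)
      have hD : (0:ℝ) < 2*(j:ℝ)+1 := by positivity
      have hjr : (0:ℝ) < (j:ℝ) := by exact_mod_cast hj
      -- sum the key step inequality
      have hsum : ∑ k ∈ Finset.range (n+1),
            |(∑ i ∈ Finset.Icc 1 (j+1), pp μ V i (j+1) (k+1)) - ((j:ℝ)+1) * yv (k+1)|
          ≤ (∑ k ∈ Finset.range (n+1),
              |(∑ i ∈ Finset.Icc 1 j, pp μ V i j (k+1)) - (j:ℝ) * yv (k+1)|)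
            + (∑ k ∈ Finset.range (n+1),
                (((k:ℝ) * |(∑ i ∈ Finset.Icc 1 j, pp μ V i j k) - (j:ℝ) * yv k|
                  - ((k:ℝ)+1) * |(∑ i ∈ Finset.Icc 1 j, pp μ V i j (k+1)) - (j:ℝ) * yv (k+1)|)
                  / (2*(j:ℝ)+1)))
            + ∑ k ∈ Finset.range (n+1),
                (yv (k+1) + (if k ≤ 1 then (1:ℝ) else 0)) / (2*(j:ℝ)+1) := by
        rw [← Finset.sum_add_distrib, ← Finset.sum_add_distrib]
        apply Finset.sum_le_sum
        intro k _
        exact key_step μ V n hV hinit htrans j hj hjn' k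
      -- telescoping term is ≤ 0
      set f : ℕ → ℝ := fun m =>
        (m:ℝ) * |(∑ i ∈ Finset.Icc 1 j, pp μ V i j m) - (j:ℝ) * yv m| / (2*(j:ℝ)+1) with hf
      have htel : ∑ k ∈ Finset.range (n+1),
            (((k:ℝ) * |(∑ i ∈ Finset.Icc 1 j, pp μ V i j k) - (j:ℝ) * yv k|
              - ((k:ℝ)+1) * |(∑ i ∈ Finset.Icc 1 j, pp μ V i j (k+1)) - (j:ℝ) * yv (k+1)|)
              / (2*(j:ℝ)+1)) ≤ 0 := by
        have hfk : ∀ k : ℕ, (((k:ℝ) * |(∑ i ∈ Finset.Icc 1 j, pp μ V i j k) - (j:ℝ) * yv k|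
              - ((k:ℝ)+1) * |(∑ i ∈ Finset.Icc 1 j, pp μ V i j (k+1)) - (j:ℝ) * yv (k+1)|)
              / (2*(j:ℝ)+1)) = f k - f (k+1) := by
          intro k
          rw [hf]
          push_cast
          ring
        rw [Finset.sum_congr rfl (fun k _ => hfk k), Finset.sum_range_sub' f (n+1), hf]
        simp only [Nat.cast_zero, zero_mul, zero_div, zero_sub, neg_nonpos]
        positivity
      -- error term
      have herr : ∑ k ∈ Finset.range (n+1),
            (yv (k+1) + (if k ≤ 1 then (1:ℝ) else 0)) / (2*(j:ℝ)+1) ≤ 2 / (j:ℝ) := by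
        have hsplit : ∀ k : ℕ, (if k ≤ 1 then (1:ℝ) else 0)
            = (if k = 0 then (1:ℝ) else 0) + (if k = 1 then (1:ℝ) else 0) := by
          intro k
          by_cases h0 : k = 0
          · subst h0; norm_num
          · by_cases h1 : k = 1
            · subst h1; norm_num
            · rw [if_neg (by omega), if_neg h0, if_neg h1]; norm_num
        have hisum : ∑ k ∈ Finset.range (n+1), (if k ≤ 1 then (1:ℝ) else 0) = 2 := by
          rw [Finset.sum_congr rfl (fun k _ => hsplit k), Finset.sum_add_distrib,
            Finset.sum_ite_eq' _ _ (fun _ => (1:ℝ)), Finset.sum_ite_eq' _ _ (fun _ => (1:ℝ)),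
            if_pos (Finset.mem_range.2 (by omega)), if_pos (Finset.mem_range.2 (by omega))]
          norm_num
        rw [← Finset.sum_div, Finset.sum_add_distrib, hisum]
        have hyv : ∑ k ∈ Finset.range (n+1), yv (k+1) ≤ 1 := yv_sum_le_one (n+1)
        rw [div_le_div_iff₀ hD hjr]
        nlinarith [hyv]
      -- harmonic bookkeeping
      have hharm : ((harmonic (j+1-1) : ℚ) : ℝ) = ((harmonic (j-1) : ℚ) : ℝ) + 1 / (j:ℝ) := by
        have h1 : j + 1 - 1 = (j - 1) + 1 := by omega
        rw [h1, harmonic_succ]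
        have h2 : j - 1 + 1 = j := by omega
        rw [h2]
        push_cast
        rw [inv_eq_one_div]
      have hcast : ∀ k : ℕ, (((j:ℕ)+1:ℕ):ℝ) * yv (k+1) = ((j:ℝ)+1) * yv (k+1) := by
        intro k; push_cast; ring
      calc ∑ k ∈ Finset.range (n+1),
            |(∑ i ∈ Finset.Icc 1 (j+1), pp μ V i (j+1) (k+1)) - ((j+1:ℕ):ℝ) * yv (k+1)|
          = ∑ k ∈ Finset.range (n+1),
            |(∑ i ∈ Finset.Icc 1 (j+1), pp μ V i (j+1) (k+1)) - ((j:ℝ)+1) * yv (k+1)| := by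
            apply Finset.sum_congr rfl
            intro k _
            rw [hcast k]
        _ ≤ (2 + 2 * ((harmonic (j-1) : ℚ) : ℝ)) + 0 + 2/(j:ℝ) := by
            refine hsum.trans (add_le_add (add_le_add ihv htel) herr)
        _ = 2 + 2 * ((harmonic (j+1-1) : ℚ) : ℝ) := by
            rw [hharm]
            ring
  exact main n (by omega) le_rfl

end PA6

open scoped Classical

section PA7

variable {Ω : Type} [MeasurableSpace Ω] (μ : Measure Ω) [IsProbabilityMeasure μ]
variable (V : ℕ → ℕ → Ω → ℕ) (n : ℕ)

lemma mix_repr (hV : ∀ i j, Measurable (V i j))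
    (hinit : ∀ i : ℕ, 1 ≤ i → i ≤ n → (∀ ω, V i i ω = 1 ∨ V i i ω = 2) ∧
        (μ {ω | V i i ω = 2}).toReal = 1 / (2 * (i : ℝ) - 1))
    (htrans : ∀ i : ℕ, 1 ≤ i → ∀ j : ℕ, i ≤ j → j < n → ∀ w : ℕ,
        (μ {ω | V i (j + 1) ω = w + 1 ∧ V i j ω = w}).toReal
            = (μ {ω | V i j ω = w}).toReal * w / (2 * ((j : ℝ) + 1) - 1) ∧
        (μ {ω | V i (j + 1) ω = w ∧ V i j ω = w}).toReal
            = (μ {ω | V i j ω = w}).toReal * (1 - w / (2 * ((j : ℝ) + 1) - 1)))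
    (B : Set ℕ) :
    ∑ i ∈ Finset.Icc 1 n, (μ {ω | V i n ω ∈ B}).toReal
      = ∑ k ∈ Finset.range (n+1),
          (if (k+1) ∈ B then (∑ i ∈ Finset.Icc 1 n, pp μ V i n (k+1)) else 0) := by
  classical
  have hper : ∀ i ∈ Finset.Icc 1 n, (μ {ω | V i n ω ∈ B}).toReal
      = ∑ k ∈ Finset.range (n+2), (if k ∈ B then pp μ V i n k else 0) := by
    intro i hi
    rw [Finset.mem_Icc] at hi
    have hsmeas : MeasurableSet {ω | V i n ω ∈ B} := hV i n B.to_countable.measurableSet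
    have hs := hasSum_inter_level μ (V i n) (hV i n) {ω | V i n ω ∈ B} hsmeas
    have hterm : ∀ w : ℕ, (μ ({ω | V i n ω ∈ B} ∩ {ω | V i n ω = w})).toReal
        = (if w ∈ B then pp μ V i n w else 0) := by
      intro w
      by_cases hw : w ∈ B
      · rw [if_pos hw]
        have hseteq : {ω | V i n ω ∈ B} ∩ {ω | V i n ω = w} = {ω | V i n ω = w} := by
          ext ω
          simp only [Set.mem_inter_iff, Set.mem_setOf_eq]
          exact ⟨fun h => h.2, fun h => ⟨by rw [h]; exact hw, h⟩⟩
        rw [hseteq]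
        rfl
      · rw [if_neg hw]
        have : {ω | V i n ω ∈ B} ∩ {ω | V i n ω = w} = ∅ := by
          ext ω
          simp only [Set.mem_inter_iff, Set.mem_setOf_eq, Set.mem_empty_iff_false, iff_false]
          rintro ⟨h1, h2⟩
          exact hw (h2 ▸ h1)
        rw [this]
        simp
    have hs2 : HasSum (fun w => if w ∈ B then pp μ V i n w else 0)
        ((μ {ω | V i n ω ∈ B}).toReal) := by
      have := funext hterm
      rwa [this] at hs
    have hvan : ∀ w ∉ Finset.range (n+2), (if w ∈ B then pp μ V i n w else 0) = 0 := by
      intro w hw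
      rw [Finset.mem_range, not_lt] at hw
      have : pp μ V i n w = 0 :=
        pp_out μ V n hV hinit htrans i hi.1 n hi.2 le_rfl w (by omega)
      rw [this]
      simp
    exact hs2.unique (hasSum_sum_of_ne_finset_zero hvan)
  rw [Finset.sum_congr rfl hper, Finset.sum_comm]
  have hswap : ∀ k ∈ Finset.range (n+2),
      ∑ i ∈ Finset.Icc 1 n, (if k ∈ B then pp μ V i n k else 0)
        = (if k ∈ B then (∑ i ∈ Finset.Icc 1 n, pp μ V i n k) else 0) := by
    intro k _
    by_cases hk : k ∈ B
    · simp [hk]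
    · simp [hk]
  rw [Finset.sum_congr rfl hswap, Finset.sum_range_succ']
  have h0 : (if 0 ∈ B then (∑ i ∈ Finset.Icc 1 n, pp μ V i n 0) else 0) = 0 := by
    have : (∑ i ∈ Finset.Icc 1 n, pp μ V i n 0) = 0 :=
      NN_out μ V n hV hinit htrans n le_rfl 0 (Or.inl rfl)
    rw [this, ite_self]
  rw [h0, add_zero]

set_option maxHeartbeats 1000000 in
lemma yule_repr (B : Set ℕ) :
    yuleProb B = (∑ k ∈ Finset.range (n+1), (if (k+1) ∈ B then yv (k+1) else 0))
      + ∑' k : ℕ, (if (k+(n+1)+1) ∈ B then yv (k+(n+1)+1) else 0) := by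
  classical
  have hg : ∀ k : ℕ, B.indicator
        (fun _ => 4 / (((k : ℝ) + 1) * ((k : ℝ) + 2) * ((k : ℝ) + 3))) (k + 1)
      = (if (k+1) ∈ B then yv (k+1) else 0) := by
    intro k
    rw [Set.indicator_apply]
    by_cases hk : (k+1) ∈ B
    · rw [if_pos hk, if_pos hk]
      unfold yv
      push_cast
      ring
    · rw [if_neg hk, if_neg hk]
  have hrepr : yuleProb B = ∑' k : ℕ, (if (k+1) ∈ B then yv (k+1) else 0) := by
    unfold yuleProb
    exact tsum_congr hg
  have hsummable : Summable (fun k : ℕ => (if (k+1) ∈ B then yv (k+1) else 0)) := by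
    apply Summable.of_nonneg_of_le (fun k => ?_) (fun k => ?_) yv_hasSum.summable
    · by_cases hk : (k+1) ∈ B
      · rw [if_pos hk]; exact yv_nonneg _
      · rw [if_neg hk]
    · by_cases hk : (k+1) ∈ B
      · rw [if_pos hk]
      · rw [if_neg hk]; exact yv_nonneg _
  rw [hrepr]
  exact (Summable.sum_add_tsum_nat_add (n+1) hsummable).symm

set_option maxHeartbeats 1000000 in
lemma yule_tail_bound (B : Set ℕ) :
    0 ≤ (∑' k : ℕ, (if (k+(n+1)+1) ∈ B then yv (k+(n+1)+1) else 0)) ∧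
    (∑' k : ℕ, (if (k+(n+1)+1) ∈ B then yv (k+(n+1)+1) else 0))
      ≤ 2 / (((n:ℝ)+2) * ((n:ℝ)+3)) := by
  classical
  have hsummable : Summable (fun k : ℕ => (if (k+1) ∈ B then yv (k+1) else 0)) := by
    apply Summable.of_nonneg_of_le (fun k => ?_) (fun k => ?_) yv_hasSum.summable
    · by_cases hk : (k+1) ∈ B
      · rw [if_pos hk]; exact yv_nonneg _
      · rw [if_neg hk]
    · by_cases hk : (k+1) ∈ B
      · rw [if_pos hk]
      · rw [if_neg hk]; exact yv_nonneg _
  have hs1 : Summable (fun k : ℕ => (if (k+(n+1)+1) ∈ B then yv (k+(n+1)+1) else 0)) :=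
    (summable_nat_add_iff (n+1)).2 hsummable
  have hs2 : Summable (fun k : ℕ => yv (k+(n+1)+1)) :=
    (summable_nat_add_iff (n+1)).2 yv_hasSum.summable
  constructor
  · apply tsum_nonneg
    intro k
    by_cases hk : (k+(n+1)+1) ∈ B
    · rw [if_pos hk]; exact yv_nonneg _
    · rw [if_neg hk]
  · have hle : (∑' k : ℕ, (if (k+(n+1)+1) ∈ B then yv (k+(n+1)+1) else 0))
        ≤ ∑' k : ℕ, yv (k+(n+1)+1) := by
      apply Summable.tsum_le_tsum _ hs1 hs2
      intro k
      by_cases hk : (k+(n+1)+1) ∈ B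
      · rw [if_pos hk]
      · rw [if_neg hk]; exact yv_nonneg _
    have hval : ∑' k : ℕ, yv (k+(n+1)+1) = 2 / (((n:ℝ)+2) * ((n:ℝ)+3)) := by
      have hsum2 : Summable (fun k : ℕ => yv (k+1)) := yv_hasSum.summable
      have hsplit := Summable.sum_add_tsum_nat_add (n+1) hsum2
      rw [yv_hasSum.tsum_eq, yv_sum_range (n+1)] at hsplit
      push_cast at hsplit ⊢
      have h2 : ((n:ℝ)+1+1) * ((n:ℝ)+1+2) = ((n:ℝ)+2)*((n:ℝ)+3) := by ring
      rw [h2] at hsplit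
      linarith [hsplit]
    linarith [hle, hval.le, hval.ge]

end PA7


/-- The total degree of a uniformly chosen vertex in the preferential attachment graph
on `n` vertices is approximately Yule-Simon distributed; the law of `W_{n,I}` is the
mixture `(1/n) ∑_{i=1}^n L(W_{n,i})`. -/
theorem preferential_attachment_random_vertex_yule_simon :
    ∃ C : ℝ, ∀ (Ω : Type) (_ : MeasurableSpace Ω) (μ : Measure Ω)
      (_ : IsProbabilityMeasure μ) (n : ℕ), 2 ≤ n →
      ∀ V : ℕ → ℕ → Ω → ℕ, (∀ i j, Measurable (V i j)) →
      -- `V i j` is the total degree `W_{j,i}` of vertex `i` at time `j`;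
      -- initial step: `W_{i,i} = 1 + Bernoulli(1/(2i-1))`
      (∀ i : ℕ, 1 ≤ i → i ≤ n →
        (∀ ω, V i i ω = 1 ∨ V i i ω = 2) ∧
        (μ {ω | V i i ω = 2}).toReal = 1 / (2 * (i : ℝ) - 1)) →
      -- transition: conditional on `W_{j,i} = w`, vertex `j+1` attaches to `i`
      -- with probability `w/(2(j+1)-1)`
      (∀ i : ℕ, 1 ≤ i → ∀ j : ℕ, i ≤ j → j < n → ∀ w : ℕ,
        (μ {ω | V i (j + 1) ω = w + 1 ∧ V i j ω = w}).toReal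
            = (μ {ω | V i j ω = w}).toReal * w / (2 * ((j : ℝ) + 1) - 1) ∧
        (μ {ω | V i (j + 1) ω = w ∧ V i j ω = w}).toReal
            = (μ {ω | V i j ω = w}).toReal * (1 - w / (2 * ((j : ℝ) + 1) - 1))) →
      (⨆ B : Set ℕ,
        |(1 / (n : ℝ)) * ∑ i ∈ Finset.Icc 1 n, (μ {ω | V i n ω ∈ B}).toReal
          - yuleProb B|)
        ≤ C * Real.log n / n := by
  classical
  refine ⟨10, ?_⟩
  intro Ω mΩ μ hPM n hn V hV hinit htrans
  haveI := hPM
  have hn0 : (0:ℝ) < (n:ℝ) := by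
    have : (2:ℝ) ≤ (n:ℝ) := by exact_mod_cast hn
    linarith
  have hnne : (n:ℝ) ≠ 0 := ne_of_gt hn0
  have hlog2 : (0.6931471803:ℝ) < Real.log 2 := Real.log_two_gt_d9
  have hlogn : Real.log 2 ≤ Real.log n :=
    Real.log_le_log (by norm_num) (by exact_mod_cast hn)
  have hlogpos : (0:ℝ) < Real.log n := by linarith
  apply Real.iSup_le _ (by positivity)
  intro B
  have hmix := mix_repr μ V n hV hinit htrans B
  have hyule := yule_repr (n := n) B
  obtain ⟨hT0, hTle⟩ := yule_tail_bound (n := n) B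
  have hSb := S_bound μ V n hn hV hinit htrans
  set T : ℝ := ∑' k : ℕ, (if (k+(n+1)+1) ∈ B then yv (k+(n+1)+1) else 0) with hT
  set S : ℝ := ∑ k ∈ Finset.range (n+1),
      |(∑ i ∈ Finset.Icc 1 n, pp μ V i n (k+1)) - (n:ℝ) * yv (k+1)| with hS
  -- rewrite the difference
  have h1 : (1 / (n : ℝ)) * ∑ i ∈ Finset.Icc 1 n, (μ {ω | V i n ω ∈ B}).toReal
      - yuleProb B
      = (∑ k ∈ Finset.range (n+1),
          ((1/(n:ℝ)) * (if (k+1) ∈ B then (∑ i ∈ Finset.Icc 1 n, pp μ V i n (k+1)) else 0)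
            - (if (k+1) ∈ B then yv (k+1) else 0))) - T := by
    rw [hmix, hyule, Finset.mul_sum, Finset.sum_sub_distrib]
    ring
  have hper : ∀ k ∈ Finset.range (n+1),
      |(1/(n:ℝ)) * (if (k+1) ∈ B then (∑ i ∈ Finset.Icc 1 n, pp μ V i n (k+1)) else 0)
        - (if (k+1) ∈ B then yv (k+1) else 0)|
      ≤ (1/(n:ℝ)) * |(∑ i ∈ Finset.Icc 1 n, pp μ V i n (k+1)) - (n:ℝ) * yv (k+1)| := by
    intro k _
    by_cases hk : (k+1) ∈ B
    · rw [if_pos hk, if_pos hk]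
      have he : (1/(n:ℝ)) * (∑ i ∈ Finset.Icc 1 n, pp μ V i n (k+1)) - yv (k+1)
          = ((∑ i ∈ Finset.Icc 1 n, pp μ V i n (k+1)) - (n:ℝ) * yv (k+1)) / (n:ℝ) := by
        field_simp
      rw [he, abs_div, abs_of_pos hn0, div_eq_inv_mul, inv_eq_one_div]
    · rw [if_neg hk, if_neg hk]
      simp only [mul_zero, sub_zero, abs_zero]
      positivity
  have h2 : |(1 / (n : ℝ)) * ∑ i ∈ Finset.Icc 1 n, (μ {ω | V i n ω ∈ B}).toReal
      - yuleProb B| ≤ (1/(n:ℝ)) * S + T := by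
    rw [h1]
    refine (abs_sub _ _).trans ?_
    have hsum : |∑ k ∈ Finset.range (n+1),
        ((1/(n:ℝ)) * (if (k+1) ∈ B then (∑ i ∈ Finset.Icc 1 n, pp μ V i n (k+1)) else 0)
          - (if (k+1) ∈ B then yv (k+1) else 0))| ≤ (1/(n:ℝ)) * S := by
      refine (Finset.abs_sum_le_sum_abs _ _).trans ?_
      rw [hS, Finset.mul_sum]
      exact Finset.sum_le_sum hper
    rw [abs_of_nonneg hT0]
    linarith [hsum]
  -- numeric endgame
  have hharm : ((harmonic (n-1) : ℚ) : ℝ) ≤ 1 + Real.log n := by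
    refine (harmonic_le_one_add_log (n-1)).trans ?_
    have hc1 : (1:ℝ) ≤ ((n-1:ℕ):ℝ) := by
      have : 1 ≤ n - 1 := by omega
      exact_mod_cast this
    have hc2 : ((n-1:ℕ):ℝ) ≤ (n:ℝ) := by
      have : n - 1 ≤ n := by omega
      exact_mod_cast this
    have := Real.log_le_log (by linarith : (0:ℝ) < ((n-1:ℕ):ℝ)) hc2
    linarith
  have hSle : S ≤ 4 + 2 * Real.log n := by
    calc S ≤ 2 + 2 * ((harmonic (n-1) : ℚ) : ℝ) := hSb
      _ ≤ 2 + 2 * (1 + Real.log n) := by linarith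
      _ = 4 + 2 * Real.log n := by ring
  have hTle2 : T ≤ 1/(n:ℝ) := by
    refine hTle.trans ?_
    rw [div_le_div_iff₀ (by positivity) hn0]
    nlinarith [hn0]
  have hfinal : (1/(n:ℝ)) * S + T ≤ 10 * Real.log n / n := by
    have hstep1 : (1/(n:ℝ)) * S + T ≤ (1/(n:ℝ)) * (4 + 2 * Real.log n) + 1/(n:ℝ) := by
      have := mul_le_mul_of_nonneg_left hSle (le_of_lt (by positivity : (0:ℝ) < 1/(n:ℝ)))
      linarith
    refine hstep1.trans ?_
    have he2 : 10 * Real.log n / (n:ℝ) - ((1/(n:ℝ)) * (4 + 2 * Real.log n) + 1/(n:ℝ))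
        = (8 * Real.log n - 5) / (n:ℝ) := by
      field_simp
      ring
    have hpos : (0:ℝ) ≤ (8 * Real.log n - 5) / (n:ℝ) :=
      div_nonneg (by linarith) (le_of_lt hn0)
    linarith [he2, hpos]
  exact h2.trans hfinal
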